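/- Let B₀ ∈ ℝ with B₀ ≠ 0 and let b = (0,0,B₀) ∈ ℝ³ be a constant magnetic field along the z axis. Then among the involutory 3×3 signed permutation matrices M, exactly 8 satisfy det(M) · (M·b) = −b; namely the 4 diagonal matrices diag(s₁,s₂,s₃) with s₁s₂ = −1, and the 4 matrices with M₁₂ = M₂₁ = s_P, M₃₃ = s₃, s_P, s₃ ∈ {1,−1}. -/

import Mathlib

/-- A 3×3 signed permutation matrix: exactly one nonzero entry in each row
and each column, and each nonzero entry equals `1` or `-1`. -/
def IsSignedPermMatrix (M : Matrix (Fin 3) (Fin 3) ℝ) : Prop :=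
  (∀ i, ∃! j, M i j ≠ 0) ∧ (∀ j, ∃! i, M i j ≠ 0) ∧
    (∀ i j, M i j ≠ 0 → M i j = 1 ∨ M i j = -1)

lemma decode {M : Matrix (Fin 3) (Fin 3) ℝ} (h : IsSignedPermMatrix M) :
    ∃ σ : Equiv.Perm (Fin 3), ∃ s : Fin 3 → ℝ, (∀ i, s i = 1 ∨ s i = -1) ∧
      ∀ i j, M i j = if j = σ i then s i else 0 := by
  obtain ⟨hrow, hcol, hval⟩ := h
  choose f hf hf' using hrow
  have hinj : Function.Injective f := by
    intro i i' he
    obtain ⟨_, _, huniq⟩ := hcol (f i)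
    exact (huniq i (hf i)).trans (huniq i' (he ▸ hf i')).symm
  refine ⟨Equiv.ofBijective f (Finite.injective_iff_bijective.mp hinj), fun i => M i (f i),
    fun i => hval i (f i) (hf i), fun i j => ?_⟩
  simp only [Equiv.ofBijective_apply]
  by_cases hj : j = f i
  · simp [hj]
  · simp only [hj, if_false]
    by_contra hne
    exact hj (hf' i j hne)

lemma encode (σ : Equiv.Perm (Fin 3)) (s : Fin 3 → ℝ) (hs : ∀ i, s i = 1 ∨ s i = -1) :
    IsSignedPermMatrix (Matrix.of fun i j => if j = σ i then s i else 0) := by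
  have hne : ∀ i, s i ≠ 0 := fun i => by rcases hs i with h | h <;> rw [h] <;> norm_num
  refine ⟨fun i => ⟨σ i, by simpa using hne i, fun j hj => ?_⟩,
    fun j => ⟨σ.symm j, by simp only [Matrix.of_apply, Equiv.apply_symm_apply, if_pos rfl]; exact hne (σ.symm j), fun i hi => ?_⟩,
    fun i j hij => ?_⟩
  · by_contra hc
    exact hj (if_neg hc)
  · by_contra hc
    have hne' : j ≠ σ i := fun h => hc (by rw [h, Equiv.symm_apply_apply])
    exact hi (if_neg hne')
  · by_cases hj : j = σ i
    · have : (Matrix.of (fun i j => if j = σ i then s i else 0) : Matrix (Fin 3) (Fin 3) ℝ) i j = s i := if_pos hj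
      rw [this]; exact hs i
    · exact absurd (if_neg hj) hij

lemma diag_eq (s₁ s₂ s₃ : ℝ) :
    Matrix.diagonal ![s₁, s₂, s₃] = !![s₁, 0, 0; 0, s₂, 0; 0, 0, s₃] := by
  ext i j
  fin_cases i <;> fin_cases j <;> simp [Matrix.diagonal, Matrix.vecHead, Matrix.vecTail]

lemma mat_ne {M N : Matrix (Fin 3) (Fin 3) ℝ} (i j : Fin 3) (h : M i j ≠ N i j) : M ≠ N :=
  fun he => h (by rw [he])

lemma spm_diag {s₁ s₂ s₃ : ℝ} (h1 : s₁ = 1 ∨ s₁ = -1) (h2 : s₂ = 1 ∨ s₂ = -1)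
    (h3 : s₃ = 1 ∨ s₃ = -1) : IsSignedPermMatrix (Matrix.diagonal ![s₁, s₂, s₃]) := by
  have : Matrix.diagonal ![s₁, s₂, s₃] =
      Matrix.of fun i j => if j = (Equiv.refl (Fin 3)) i then ![s₁, s₂, s₃] i else 0 := by
    ext i j
    simp [Matrix.diagonal, eq_comm]
  rw [this]
  exact encode _ _ (fun i => by fin_cases i <;> assumption)

lemma spm_swap {sP s₃ : ℝ} (hP : sP = 1 ∨ sP = -1) (h3 : s₃ = 1 ∨ s₃ = -1) :
    IsSignedPermMatrix !![0, sP, 0; sP, 0, 0; 0, 0, s₃] := by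
  have : !![(0:ℝ), sP, 0; sP, 0, 0; 0, 0, s₃] =
      Matrix.of fun i j => if j = (Equiv.swap 0 1 : Equiv.Perm (Fin 3)) i then ![sP, sP, s₃] i else 0 := by
    ext i j
    fin_cases i <;> fin_cases j <;> simp [Equiv.swap_apply_def, Matrix.vecHead, Matrix.vecTail]
  rw [this]
  exact encode _ _ (fun i => by fin_cases i <;> assumption)

lemma key (B₀ : ℝ) (hB₀ : B₀ ≠ 0) :
    {M : Matrix (Fin 3) (Fin 3) ℝ |
        IsSignedPermMatrix M ∧ M * M = 1 ∧ M.det • M.mulVec ![0,0,B₀] = -![0,0,B₀]} =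
      ({M | ∃ s₁ s₂ s₃ : ℝ, (s₁ = 1 ∨ s₁ = -1) ∧ (s₂ = 1 ∨ s₂ = -1) ∧
          (s₃ = 1 ∨ s₃ = -1) ∧ s₁ * s₂ = -1 ∧ M = Matrix.diagonal ![s₁, s₂, s₃]} ∪
        {M | ∃ sP s₃ : ℝ, (sP = 1 ∨ sP = -1) ∧ (s₃ = 1 ∨ s₃ = -1) ∧
          M = !![0, sP, 0; sP, 0, 0; 0, 0, s₃]}) := by
  ext M
  simp only [Set.mem_setOf_eq, Set.mem_union]
  constructor
  · rintro ⟨hspm, hMM, hcond⟩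
    obtain ⟨σ, s, hs, hM⟩ := decode hspm
    have hsne : ∀ i, s i ≠ 0 := fun i => by rcases hs i with h | h <;> rw [h] <;> norm_num
    have hdet2 : M.det * M.det = 1 := by rw [← Matrix.det_mul, hMM, Matrix.det_one]
    have hdetne : M.det ≠ 0 := fun h => by rw [h, zero_mul] at hdet2; norm_num at hdet2
    have hrow : ∀ i, M.det * (M i 2 * B₀) = -(![(0:ℝ),0,B₀] i) := by
      intro i
      have := congrFun hcond i
      simp only [Pi.smul_apply, smul_eq_mul, Pi.neg_apply, Matrix.mulVec, dotProduct,
        Fin.sum_univ_three, Matrix.cons_val_zero, Matrix.cons_val_one, Matrix.head_cons,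
        mul_zero, zero_add, add_zero] at this ⊢
      exact this
    have hne2 : ∀ i : Fin 3, i ≠ 2 → σ i ≠ 2 := by
      intro i hi hc
      have hMi2 : M i 2 = s i := by rw [hM, if_pos hc.symm]
      have hr := hrow i
      have hbz : ![(0:ℝ),0,B₀] i = 0 := by fin_cases i <;> simp_all
      rw [hMi2, hbz, neg_zero] at hr
      exact (mul_ne_zero hdetne (mul_ne_zero (hsne i) hB₀)) hr
    have n0 : (σ 0).val ≠ 2 := fun h => hne2 0 (by decide) (Fin.ext h)
    have n1 : (σ 1).val ≠ 2 := fun h => hne2 1 (by decide) (Fin.ext h)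
    have i01 : (σ 0).val ≠ (σ 1).val := fun h => by
      have := σ.injective (Fin.ext h)
      exact absurd this (by decide)
    have i02 : (σ 0).val ≠ (σ 2).val := fun h => by
      have := σ.injective (Fin.ext h)
      exact absurd this (by decide)
    have i12 : (σ 1).val ≠ (σ 2).val := fun h => by
      have := σ.injective (Fin.ext h)
      exact absurd this (by decide)
    have l0 : (σ 0).val < 3 := (σ 0).isLt
    have l1 : (σ 1).val < 3 := (σ 1).isLt
    have l2 : (σ 2).val < 3 := (σ 2).isLt
    have e2 : σ 2 = 2 := Fin.ext (by omega)
    have hM22 : M 2 2 = s 2 := by rw [hM, if_pos e2.symm]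
    have hr2 : M.det * (s 2 * B₀) = -B₀ := by
      have := hrow 2
      rw [hM22] at this
      simpa using this
    have h22 : s 2 * s 2 = 1 := by rcases hs 2 with h | h <;> rw [h] <;> norm_num
    have hcase : ((σ 0).val = 0 ∧ (σ 1).val = 1) ∨ ((σ 0).val = 1 ∧ (σ 1).val = 0) := by omega
    rcases hcase with ⟨h0, h1⟩ | ⟨h0, h1⟩
    · -- diagonal case
      have e0 : σ 0 = 0 := Fin.ext h0
      have e1 : σ 1 = 1 := Fin.ext h1
      left
      have hMd : M = Matrix.diagonal ![s 0, s 1, s 2] := by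
        ext i j
        fin_cases i <;> fin_cases j <;> simp [hM, e0, e1, e2, Matrix.diagonal]
      have hdetval : M.det = s 0 * s 1 * s 2 := by
        rw [hMd]
        simp [Matrix.det_diagonal, Fin.prod_univ_three]
      rw [hdetval] at hr2
      have hprod : s 0 * s 1 = -1 := by
        have hb : (s 0 * s 1) * B₀ = (-1) * B₀ := by linear_combination hr2 - s 0 * s 1 * B₀ * h22
        exact mul_right_cancel₀ hB₀ hb
      exact ⟨s 0, s 1, s 2, hs 0, hs 1, hs 2, hprod, hMd⟩
    · -- swap case
      have e0 : σ 0 = 1 := Fin.ext h0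
      have e1 : σ 1 = 0 := Fin.ext h1
      right
      have h00 : (M * M) 0 0 = (1 : Matrix (Fin 3) (Fin 3) ℝ) 0 0 := by rw [hMM]
      have h01 : s 0 * s 1 = 1 := by
        simpa [Matrix.mul_apply, Fin.sum_univ_three, hM, e0, e1, e2, Matrix.one_apply] using h00
      have hs10 : s 1 = s 0 := by
        rcases hs 0 with h | h <;> rw [h] at h01 ⊢ <;> linarith
      have hMs : M = !![0, s 0, 0; s 0, 0, 0; 0, 0, s 2] := by
        ext i j
        fin_cases i <;> fin_cases j <;> simp [hM, e0, e1, e2, hs10, Matrix.vecHead, Matrix.vecTail]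
      exact ⟨s 0, s 2, hs 0, hs 2, hMs⟩
  · rintro (⟨s₁, s₂, s₃, h1, h2, h3, h12, rfl⟩ | ⟨sP, s₃, hP, h3, rfl⟩)
    · have q1 : s₁ * s₁ = 1 := by rcases h1 with h | h <;> rw [h] <;> norm_num
      have q2 : s₂ * s₂ = 1 := by rcases h2 with h | h <;> rw [h] <;> norm_num
      have q3 : s₃ * s₃ = 1 := by rcases h3 with h | h <;> rw [h] <;> norm_num
      refine ⟨spm_diag h1 h2 h3, ?_, ?_⟩
      · have hv : (fun i => ![s₁, s₂, s₃] i * ![s₁, s₂, s₃] i) = (1 : Fin 3 → ℝ) := by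
          funext i
          fin_cases i <;> simp [q1, q2, q3]
        rw [Matrix.diagonal_mul_diagonal, hv]
        exact Matrix.diagonal_one
      · rw [diag_eq]
        funext i
        fin_cases i <;>
          simp [Matrix.mulVec, dotProduct, Fin.sum_univ_three, Matrix.det_fin_three] <;>
          linear_combination s₃ * s₃ * B₀ * h12 - B₀ * q3
    · have qP : sP * sP = 1 := by rcases hP with h | h <;> rw [h] <;> norm_num
      have q3 : s₃ * s₃ = 1 := by rcases h3 with h | h <;> rw [h] <;> norm_num
      refine ⟨spm_swap hP h3, ?_, ?_⟩
      · ext i j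
        fin_cases i <;> fin_cases j <;>
          simp [Matrix.mul_apply, Fin.sum_univ_three, Matrix.one_apply, qP, q3,
            Matrix.vecHead, Matrix.vecTail]
      · funext i
        fin_cases i <;>
          simp [Matrix.mulVec, dotProduct, Fin.sum_univ_three, Matrix.det_fin_three] <;>
          linear_combination s₃ * s₃ * B₀ * qP + B₀ * q3

lemma union_explicit :
    ({M : Matrix (Fin 3) (Fin 3) ℝ | ∃ s₁ s₂ s₃ : ℝ, (s₁ = 1 ∨ s₁ = -1) ∧ (s₂ = 1 ∨ s₂ = -1) ∧
          (s₃ = 1 ∨ s₃ = -1) ∧ s₁ * s₂ = -1 ∧ M = Matrix.diagonal ![s₁, s₂, s₃]} ∪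
        {M | ∃ sP s₃ : ℝ, (sP = 1 ∨ sP = -1) ∧ (s₃ = 1 ∨ s₃ = -1) ∧
          M = !![0, sP, 0; sP, 0, 0; 0, 0, s₃]}) =
      ({Matrix.diagonal ![1,-1,1], Matrix.diagonal ![1,-1,-1],
        Matrix.diagonal ![-1,1,1], Matrix.diagonal ![-1,1,-1],
        !![0,1,0;1,0,0;0,0,1], !![0,1,0;1,0,0;0,0,-1],
        !![0,-1,0;-1,0,0;0,0,1], !![0,-1,0;-1,0,0;0,0,-1]} : Set (Matrix (Fin 3) (Fin 3) ℝ)) := by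
  ext M
  simp only [Set.mem_union, Set.mem_setOf_eq, Set.mem_insert_iff, Set.mem_singleton_iff]
  constructor
  · rintro (⟨s₁, s₂, s₃, h1, h2, h3, h12, rfl⟩ | ⟨sP, s₃, hP, h3, rfl⟩)
    · rcases h1 with rfl | rfl
      · have e2 : s₂ = -1 := by linarith
        subst e2
        rcases h3 with rfl | rfl <;> simp
      · have e2 : s₂ = 1 := by linarith
        subst e2
        rcases h3 with rfl | rfl <;> simp
    · rcases hP with rfl | rfl <;> rcases h3 with rfl | rfl <;> simp
  · rintro (rfl | rfl | rfl | rfl | rfl | rfl | rfl | rfl)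
    · exact Or.inl ⟨1, -1, 1, by norm_num, by norm_num, by norm_num, by norm_num, rfl⟩
    · exact Or.inl ⟨1, -1, -1, by norm_num, by norm_num, by norm_num, by norm_num, rfl⟩
    · exact Or.inl ⟨-1, 1, 1, by norm_num, by norm_num, by norm_num, by norm_num, rfl⟩
    · exact Or.inl ⟨-1, 1, -1, by norm_num, by norm_num, by norm_num, by norm_num, rfl⟩
    · exact Or.inr ⟨1, 1, by norm_num, by norm_num, rfl⟩
    · exact Or.inr ⟨1, -1, by norm_num, by norm_num, rfl⟩
    · exact Or.inr ⟨-1, 1, by norm_num, by norm_num, rfl⟩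
    · exact Or.inr ⟨-1, -1, by norm_num, by norm_num, rfl⟩

lemma card8 :
    ({Matrix.diagonal ![1,-1,1], Matrix.diagonal ![1,-1,-1],
        Matrix.diagonal ![-1,1,1], Matrix.diagonal ![-1,1,-1],
        !![0,1,0;1,0,0;0,0,1], !![0,1,0;1,0,0;0,0,-1],
        !![0,-1,0;-1,0,0;0,0,1], !![0,-1,0;-1,0,0;0,0,-1]} :
      Set (Matrix (Fin 3) (Fin 3) ℝ)).ncard = 8 := by
  have c1 : ({!![0,-1,0;-1,0,0;0,0,-1]} : Set (Matrix (Fin 3) (Fin 3) ℝ)).ncard = 1 := Set.ncard_singleton _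
  have c2 : ({!![0,-1,0;-1,0,0;0,0,1], !![0,-1,0;-1,0,0;0,0,-1]} : Set (Matrix (Fin 3) (Fin 3) ℝ)).ncard = 2 := by
    rw [Set.ncard_insert_of_notMem (by
      simp only [Set.mem_insert_iff, Set.mem_singleton_iff, not_or]
      repeat' apply And.intro
      all_goals
        first
          | (refine mat_ne 0 0 ?_; norm_num [diag_eq]; done)
          | (refine mat_ne 0 1 ?_; norm_num [diag_eq]; done)
          | (refine mat_ne 2 2 ?_; norm_num [diag_eq, Matrix.cons_val_two]; done)), c1]
  have c3 : ({!![0,1,0;1,0,0;0,0,-1], !![0,-1,0;-1,0,0;0,0,1], !![0,-1,0;-1,0,0;0,0,-1]} : Set (Matrix (Fin 3) (Fin 3) ℝ)).ncard = 3 := by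
    rw [Set.ncard_insert_of_notMem (by
      simp only [Set.mem_insert_iff, Set.mem_singleton_iff, not_or]
      repeat' apply And.intro
      all_goals
        first
          | (refine mat_ne 0 0 ?_; norm_num [diag_eq]; done)
          | (refine mat_ne 0 1 ?_; norm_num [diag_eq]; done)
          | (refine mat_ne 2 2 ?_; norm_num [diag_eq]; done)), c2]
  have c4 : ({!![0,1,0;1,0,0;0,0,1], !![0,1,0;1,0,0;0,0,-1], !![0,-1,0;-1,0,0;0,0,1], !![0,-1,0;-1,0,0;0,0,-1]} : Set (Matrix (Fin 3) (Fin 3) ℝ)).ncard = 4 := by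
    rw [Set.ncard_insert_of_notMem (by
      simp only [Set.mem_insert_iff, Set.mem_singleton_iff, not_or]
      repeat' apply And.intro
      all_goals
        first
          | (refine mat_ne 0 0 ?_; norm_num [diag_eq]; done)
          | (refine mat_ne 0 1 ?_; norm_num [diag_eq]; done)
          | (refine mat_ne 2 2 ?_; norm_num [diag_eq, Matrix.cons_val_two]; done)), c3]
  have c5 : ({Matrix.diagonal ![-1,1,-1], !![0,1,0;1,0,0;0,0,1], !![0,1,0;1,0,0;0,0,-1], !![0,-1,0;-1,0,0;0,0,1], !![0,-1,0;-1,0,0;0,0,-1]} : Set (Matrix (Fin 3) (Fin 3) ℝ)).ncard = 5 := by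
    rw [Set.ncard_insert_of_notMem (by
      simp only [Set.mem_insert_iff, Set.mem_singleton_iff, not_or]
      repeat' apply And.intro
      all_goals
        first
          | (refine mat_ne 0 0 ?_; norm_num [diag_eq]; done)
          | (refine mat_ne 0 1 ?_; norm_num [diag_eq]; done)
          | (refine mat_ne 2 2 ?_; norm_num [diag_eq]; done)), c4]
  have c6 : ({Matrix.diagonal ![-1,1,1], Matrix.diagonal ![-1,1,-1], !![0,1,0;1,0,0;0,0,1], !![0,1,0;1,0,0;0,0,-1], !![0,-1,0;-1,0,0;0,0,1], !![0,-1,0;-1,0,0;0,0,-1]} : Set (Matrix (Fin 3) (Fin 3) ℝ)).ncard = 6 := by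
    rw [Set.ncard_insert_of_notMem (by
      simp only [Set.mem_insert_iff, Set.mem_singleton_iff, not_or]
      repeat' apply And.intro
      all_goals
        first
          | (refine mat_ne 0 0 ?_; norm_num [diag_eq]; done)
          | (refine mat_ne 0 1 ?_; norm_num [diag_eq]; done)
          | (refine mat_ne 2 2 ?_; norm_num [diag_eq, Matrix.cons_val_two]; done)), c5]
  have c7 : ({Matrix.diagonal ![1,-1,-1], Matrix.diagonal ![-1,1,1], Matrix.diagonal ![-1,1,-1], !![0,1,0;1,0,0;0,0,1], !![0,1,0;1,0,0;0,0,-1], !![0,-1,0;-1,0,0;0,0,1], !![0,-1,0;-1,0,0;0,0,-1]} : Set (Matrix (Fin 3) (Fin 3) ℝ)).ncard = 7 := by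
    rw [Set.ncard_insert_of_notMem (by
      simp only [Set.mem_insert_iff, Set.mem_singleton_iff, not_or]
      repeat' apply And.intro
      all_goals
        first
          | (refine mat_ne 0 0 ?_; norm_num [diag_eq]; done)
          | (refine mat_ne 0 1 ?_; norm_num [diag_eq]; done)
          | (refine mat_ne 2 2 ?_; norm_num [diag_eq]; done)), c6]
  have c8 : ({Matrix.diagonal ![1,-1,1], Matrix.diagonal ![1,-1,-1], Matrix.diagonal ![-1,1,1], Matrix.diagonal ![-1,1,-1], !![0,1,0;1,0,0;0,0,1], !![0,1,0;1,0,0;0,0,-1], !![0,-1,0;-1,0,0;0,0,1], !![0,-1,0;-1,0,0;0,0,-1]} : Set (Matrix (Fin 3) (Fin 3) ℝ)).ncard = 8 := by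
    rw [Set.ncard_insert_of_notMem (by
      simp only [Set.mem_insert_iff, Set.mem_singleton_iff, not_or]
      repeat' apply And.intro
      all_goals
        first
          | (refine mat_ne 0 0 ?_; norm_num [diag_eq]; done)
          | (refine mat_ne 0 1 ?_; norm_num [diag_eq]; done)
          | (refine mat_ne 2 2 ?_; norm_num [diag_eq, Matrix.cons_val_two]; done)), c7]
  exact c8

/-- For a constant magnetic field `b = (0,0,B₀)` along the `z` axis, exactly 8
involutory signed permutation matrices satisfy the pseudo-vector condition
`det(M)·(M·b) = -b`: the 4 diagonal ones with `s₁s₂ = -1` and the 4 swapping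
the `x` and `y` coordinates. -/
theorem constant_field_eight_time_reversal_operations
    (B₀ : ℝ) (hB₀ : B₀ ≠ 0) (b : Fin 3 → ℝ) (hb : b = ![0, 0, B₀]) :
    {M : Matrix (Fin 3) (Fin 3) ℝ |
        IsSignedPermMatrix M ∧ M * M = 1 ∧ M.det • M.mulVec b = -b} =
      ({M | ∃ s₁ s₂ s₃ : ℝ, (s₁ = 1 ∨ s₁ = -1) ∧ (s₂ = 1 ∨ s₂ = -1) ∧
          (s₃ = 1 ∨ s₃ = -1) ∧ s₁ * s₂ = -1 ∧ M = Matrix.diagonal ![s₁, s₂, s₃]} ∪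
        {M | ∃ sP s₃ : ℝ, (sP = 1 ∨ sP = -1) ∧ (s₃ = 1 ∨ s₃ = -1) ∧
          M = !![0, sP, 0; sP, 0, 0; 0, 0, s₃]}) ∧
    {M : Matrix (Fin 3) (Fin 3) ℝ |
        IsSignedPermMatrix M ∧ M * M = 1 ∧ M.det • M.mulVec b = -b}.ncard = 8 := by
  subst hb
  refine ⟨key B₀ hB₀, ?_⟩
  rw [key B₀ hB₀, union_explicit]
  exact card8
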